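/- arXiv:2306.06292 — 2 statements merged into one kernel-verified Lean document; each statement's English description precedes it below -/
import Mathlib

section
/- Let U, V, W be finite-dimensional real inner product spaces and let g : U → V and f : V → W be linear maps with f ∘ g = 0. Define Δ = g ∘ g* + f* ∘ f : V → V. Then dim ker Δ = dim ker f − dim range g; that is, the dimension of the harmonic space of Δ equals the dimension of the homology group ker f / range g. -/
open RealInnerProductSpace


/-- For linear maps `g : U → V` and `f : V → W` between finite-dimensional real inner
product spaces with `f ∘ g = 0`, the harmonic space of the Laplacian `Δ = g g* + f* f`
has dimension `dim ker f - dim range g`, the dimension of the homology `ker f / range g`. -/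
theorem laplacian_ker_finrank (U V W : Type*)
    [NormedAddCommGroup U] [InnerProductSpace ℝ U] [FiniteDimensional ℝ U]
    [NormedAddCommGroup V] [InnerProductSpace ℝ V] [FiniteDimensional ℝ V]
    [NormedAddCommGroup W] [InnerProductSpace ℝ W] [FiniteDimensional ℝ W]
    (g : U →ₗ[ℝ] V) (f : V →ₗ[ℝ] W) (h : f ∘ₗ g = 0)
    (Δ : V →ₗ[ℝ] V)
    (hΔ : Δ = g ∘ₗ LinearMap.adjoint g + LinearMap.adjoint f ∘ₗ f) :
    Module.finrank ℝ (LinearMap.ker Δ) =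
      Module.finrank ℝ (LinearMap.ker f) - Module.finrank ℝ (LinearMap.range g) := by
  have hle : LinearMap.range g ≤ LinearMap.ker f := by
    rintro _ ⟨u, rfl⟩
    simpa using congrFun (congrArg DFunLike.coe h) u
  have hker : LinearMap.ker Δ = (LinearMap.range g)ᗮ ⊓ LinearMap.ker f := by
    ext v
    simp only [LinearMap.mem_ker, Submodule.mem_inf, Submodule.mem_orthogonal]
    constructor
    · intro hv
      have hinner : ⟪Δ v, v⟫ = ‖LinearMap.adjoint g v‖ ^ 2 + ‖f v‖ ^ 2 := by
        rw [hΔ]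
        simp only [LinearMap.add_apply, LinearMap.comp_apply, inner_add_left]
        rw [← LinearMap.adjoint_inner_right g, LinearMap.adjoint_inner_left f,
          real_inner_self_eq_norm_sq, real_inner_self_eq_norm_sq]
      rw [hv, inner_zero_left] at hinner
      have h1 : LinearMap.adjoint g v = 0 := by
        have := sq_nonneg ‖LinearMap.adjoint g v‖
        have := sq_nonneg ‖f v‖
        have : ‖LinearMap.adjoint g v‖ ^ 2 = 0 := by nlinarith
        simpa using this
      have h2 : f v = 0 := by
        have : ‖f v‖ ^ 2 = 0 := by nlinarith [sq_nonneg ‖LinearMap.adjoint g v‖]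
        simpa using this
      refine ⟨?_, h2⟩
      rintro _ ⟨u, rfl⟩
      rw [← LinearMap.adjoint_inner_right, h1, inner_zero_right]
    · rintro ⟨h1, h2⟩
      have hg : LinearMap.adjoint g v = 0 := by
        have : ∀ u : U, ⟪u, LinearMap.adjoint g v⟫ = 0 := fun u => by
          rw [LinearMap.adjoint_inner_right]; exact h1 _ ⟨u, rfl⟩
        simpa using inner_self_eq_zero.mp (this _)
      simp [hΔ, hg, h2]
  rw [hker]
  have := Submodule.finrank_add_inf_finrank_orthogonal hle
  omega
end

section
/- Let X be a real m×n matrix, L a real symmetric n×n matrix, γ ∈ ℝ, and Q a real n×k matrix with Qᵀ Q = I_k. Then the minimum over all real m×k matrices U of ‖X − U Qᵀ‖_F² + γ tr(Qᵀ L Q) equals tr(Qᵀ (γ L − Xᵀ X) Q) + ‖X‖_F². Consequently, minimizing ‖X − U Qᵀ‖_F² + γ tr(Qᵀ L Q) jointly over U and over Q with Qᵀ Q = I_k is equivalent to minimizing tr(Qᵀ (γ L − Xᵀ X) Q) over Q with Qᵀ Q = I_k. -/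
open Matrix

/-- The squared Frobenius norm `‖A‖_F² = ∑ i, ∑ j, (A i j)²` of a real matrix. -/
def frobSq {m n : ℕ} (A : Matrix (Fin m) (Fin n) ℝ) : ℝ := ∑ i, ∑ j, (A i j) ^ 2


lemma frobSq_eq_trace {m n : ℕ} (A : Matrix (Fin m) (Fin n) ℝ) :
    frobSq A = (Aᵀ * A).trace := by
  simp only [frobSq, Matrix.trace, Matrix.diag, mul_apply, transpose_apply, sq]
  rw [Finset.sum_comm]

lemma frobSq_nonneg {m n : ℕ} (A : Matrix (Fin m) (Fin n) ℝ) : 0 ≤ frobSq A :=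
  Finset.sum_nonneg fun _ _ => Finset.sum_nonneg fun _ _ => sq_nonneg _

lemma key {m n k : ℕ} (X : Matrix (Fin m) (Fin n) ℝ)
    (U : Matrix (Fin m) (Fin k) ℝ) (Q : Matrix (Fin n) (Fin k) ℝ) (hQ : Qᵀ * Q = 1) :
    frobSq (X - U * Qᵀ) = frobSq (U - X * Q) + frobSq X - (Qᵀ * (Xᵀ * X) * Q).trace := by
  rw [frobSq_eq_trace, frobSq_eq_trace, frobSq_eq_trace]
  simp only [transpose_sub, transpose_mul, transpose_transpose, Matrix.sub_mul,
    Matrix.mul_sub, trace_sub]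
  have h1 : (Q * Uᵀ * (U * Qᵀ)).trace = (Uᵀ * U).trace := by
    rw [trace_mul_cycle, Matrix.mul_assoc U Qᵀ Q, hQ, Matrix.mul_one, trace_mul_comm]
  have h2 : (Xᵀ * (U * Qᵀ)).trace = (Qᵀ * (Xᵀ * U)).trace := by
    rw [← Matrix.mul_assoc, trace_mul_cycle, Matrix.mul_assoc]
  have h3 : (Q * Uᵀ * X).trace = (Uᵀ * (X * Q)).trace := by
    rw [Matrix.mul_assoc, trace_mul_comm, Matrix.mul_assoc]
  have h4 : (Uᵀ * (X * Q)).trace = (Qᵀ * (Xᵀ * U)).trace := by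
    rw [← trace_transpose (Uᵀ * (X * Q))]
    simp [Matrix.mul_assoc, trace_mul_cycle]
  have h5 : (Qᵀ * Xᵀ * (X * Q)).trace = (Qᵀ * (Xᵀ * X) * Q).trace := by
    simp [Matrix.mul_assoc]
  have h6 : (Qᵀ * Xᵀ * U).trace = (Qᵀ * (Xᵀ * U)).trace := by rw [Matrix.mul_assoc]
  rw [h1, h2, h3, h4, h5, h6]
  ring

lemma trace_split {n k : ℕ} (Q : Matrix (Fin n) (Fin k) ℝ) (L : Matrix (Fin n) (Fin n) ℝ)
    (M : Matrix (Fin n) (Fin n) ℝ) (γ : ℝ) :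
    (Qᵀ * (γ • L - M) * Q).trace = γ * (Qᵀ * L * Q).trace - (Qᵀ * M * Q).trace := by
  simp [Matrix.mul_sub, Matrix.sub_mul, Matrix.mul_smul, Matrix.smul_mul, smul_eq_mul]

lemma frobSq_zero {m n : ℕ} : frobSq (0 : Matrix (Fin m) (Fin n) ℝ) = 0 := by
  simp [frobSq]

lemma obj_eq {m n k : ℕ} (X : Matrix (Fin m) (Fin n) ℝ) (L : Matrix (Fin n) (Fin n) ℝ)
    (γ : ℝ) (U : Matrix (Fin m) (Fin k) ℝ) (Q : Matrix (Fin n) (Fin k) ℝ)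
    (hQ : Qᵀ * Q = 1) :
    frobSq (X - U * Qᵀ) + γ * (Qᵀ * L * Q).trace =
      frobSq (U - X * Q) + ((Qᵀ * (γ • L - Xᵀ * X) * Q).trace + frobSq X) := by
  rw [key X U Q hQ, trace_split]; ring

/-- For `Q` with orthonormal columns, the minimum over `U` of
`‖X - U Qᵀ‖_F² + γ tr (Qᵀ L Q)` equals `tr (Qᵀ (γ L - Xᵀ X) Q) + ‖X‖_F²`; consequently,
joint minimization of the gLPCA objective over `(U, Q)` with `Qᵀ Q = I` is equivalent to
minimizing `tr (Qᵀ (γ L - Xᵀ X) Q)` over `Q` with `Qᵀ Q = I`. -/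
theorem glpca_reduction (m n k : ℕ)
    (X : Matrix (Fin m) (Fin n) ℝ) (L : Matrix (Fin n) (Fin n) ℝ) (hL : L.IsSymm)
    (γ : ℝ) :
    (∀ Q : Matrix (Fin n) (Fin k) ℝ, Qᵀ * Q = 1 →
      IsLeast {x : ℝ | ∃ U : Matrix (Fin m) (Fin k) ℝ,
          x = frobSq (X - U * Qᵀ) + γ * (Qᵀ * L * Q).trace}
        ((Qᵀ * (γ • L - Xᵀ * X) * Q).trace + frobSq X)) ∧
    (∀ Q : Matrix (Fin n) (Fin k) ℝ, Qᵀ * Q = 1 →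
      ((∃ U : Matrix (Fin m) (Fin k) ℝ,
          ∀ (U' : Matrix (Fin m) (Fin k) ℝ) (Q' : Matrix (Fin n) (Fin k) ℝ), Q'ᵀ * Q' = 1 →
            frobSq (X - U * Qᵀ) + γ * (Qᵀ * L * Q).trace ≤
              frobSq (X - U' * Q'ᵀ) + γ * (Q'ᵀ * L * Q').trace) ↔
        (∀ Q' : Matrix (Fin n) (Fin k) ℝ, Q'ᵀ * Q' = 1 →
          (Qᵀ * (γ • L - Xᵀ * X) * Q).trace ≤ (Q'ᵀ * (γ • L - Xᵀ * X) * Q').trace))) := by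
  constructor
  · intro Q hQ
    constructor
    · exact ⟨X * Q, by rw [obj_eq X L γ (X * Q) Q hQ, sub_self, frobSq_zero, zero_add]⟩
    · rintro x ⟨U, rfl⟩
      rw [obj_eq X L γ U Q hQ]
      have := frobSq_nonneg (U - X * Q)
      linarith
  · intro Q hQ
    constructor
    · rintro ⟨U, hU⟩ Q' hQ'
      have h := hU (X * Q') Q' hQ'
      rw [obj_eq X L γ U Q hQ, obj_eq X L γ (X * Q') Q' hQ', sub_self, frobSq_zero] at h
      have := frobSq_nonneg (U - X * Q)
      linarith
    · intro h
      refine ⟨X * Q, fun U' Q' hQ' => ?_⟩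
      rw [obj_eq X L γ (X * Q) Q hQ, obj_eq X L γ U' Q' hQ', sub_self, frobSq_zero]
      have := frobSq_nonneg (U' - X * Q')
      have := h Q' hQ'
      linarith
end
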